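/- Let (T,χ) be a lenient tree decomposition of G with |V(T)| ≥ 3, let S be a connected vertex set of G, and let t, t′, t″ be nodes of T such that t′ is an internal node of the unique path in T from t to t″. If χ(t) ∩ S ≠ ∅ and χ(t″) ∩ S ≠ ∅, then χ(t′) ∩ S ≠ ∅. -/

import Mathlib

open SimpleGraph

section Defs

variable {V W : Type}

/-- `X` covers the family `B`: every member of `B` meets `X`. -/
def Covers (X : Set V) (B : Set (Set V)) : Prop := ∀ S ∈ B, (S ∩ X).Nonempty

/-- A strict bramble: a family of connected vertex sets, pairwise intersecting. -/
def IsStrictBramble (G : SimpleGraph V) (B : Set (Set V)) : Prop :=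
  (∀ S ∈ B, (G.induce S).Connected) ∧ ∀ S ∈ B, ∀ S' ∈ B, (S ∩ S').Nonempty

/-- Two vertex sets touch: they intersect or are joined by an edge. -/
def Touches (G : SimpleGraph V) (S S' : Set V) : Prop :=
  (S ∩ S').Nonempty ∨ ∃ u ∈ S, ∃ v ∈ S', G.Adj u v

/-- A bramble: a family of connected vertex sets, pairwise touching. -/
def IsBramble (G : SimpleGraph V) (B : Set (Set V)) : Prop :=
  (∀ S ∈ B, (G.induce S).Connected) ∧ ∀ S ∈ B, ∀ S' ∈ B, Touches G S S'

/-- The order of a family of vertex sets: minimum size of a covering set. -/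
noncomputable def brOrder (B : Set (Set V)) : ℕ :=
  sInf {n | ∃ X : Set V, Covers X B ∧ X.ncard = n}

/-- The strict bramble number. -/
noncomputable def sbn (G : SimpleGraph V) : ℕ :=
  sSup {n | ∃ B, IsStrictBramble G B ∧ brOrder B = n}

/-- The bramble number. -/
noncomputable def bn (G : SimpleGraph V) : ℕ :=
  sSup {n | ∃ B, IsBramble G B ∧ brOrder B = n}

/-- `S` is an `(x,y)`-separator: `x, y ∉ S` and `x, y` lie in different
components of `G − S`. -/
def SepPair (G : SimpleGraph V) (x y : V) (S : Set V) : Prop :=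
  x ∉ S ∧ y ∉ S ∧ ∀ (hx : x ∈ Sᶜ) (hy : y ∈ Sᶜ),
    ¬ (G.induce Sᶜ).Reachable ⟨x, hx⟩ ⟨y, hy⟩

/-- `S` is an `(X,Y)`-separator of `G`. -/
def IsSetSeparator (G : SimpleGraph V) (X Y S : Set V) : Prop :=
  ∀ x ∈ X \ S, ∀ y ∈ Y \ S, SepPair G x y S

/-- A lenient tree decomposition of `G`. -/
structure LenientTD (G : SimpleGraph V) where
  ι : Type
  T : SimpleGraph ι
  tree : T.IsTree
  χ : ι → Set V
  covers : ∀ v : V, ∃ t, v ∈ χ t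
  edge_mem : ∀ u v : V, G.Adj u v →
    ∃ t t', (t = t' ∨ T.Adj t t') ∧ u ∈ χ t ∪ χ t' ∧ v ∈ χ t ∪ χ t'
  trace_conn : ∀ v : V, (T.induce {t | v ∈ χ t}).Connected

/-- The width of a lenient tree decomposition is at most `k`. -/
def LenientTD.WidthLE {G : SimpleGraph V} (D : LenientTD G) (k : ℕ) : Prop :=
  ∀ t, (D.χ t).ncard ≤ k

/-- An ordinary tree decomposition of `G`. -/
structure TreeDecomp (G : SimpleGraph V) where
  ι : Type
  T : SimpleGraph ι
  tree : T.IsTree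
  χ : ι → Set V
  covers : ∀ v : V, ∃ t, v ∈ χ t
  edge_mem : ∀ u v : V, G.Adj u v → ∃ t, u ∈ χ t ∧ v ∈ χ t
  trace_conn : ∀ v : V, (T.induce {t | v ∈ χ t}).Connected

/-- Treewidth: minimum over tree decompositions of (max bag size − 1). -/
noncomputable def tw (G : SimpleGraph V) : ℕ :=
  sInf {k | ∃ D : TreeDecomp G, ∀ t, (D.χ t).ncard ≤ k + 1}

/-- A minor model of `H` in `G`. -/
def IsMinorModel (H : SimpleGraph W) (G : SimpleGraph V) (μ : W → Set V) : Prop :=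
  (∀ w, (G.induce (μ w)).Connected) ∧
  (∀ w w', w ≠ w' → μ w ∩ μ w' = ∅) ∧
  (∀ w w', H.Adj w w' → ∃ u ∈ μ w, ∃ v ∈ μ w', G.Adj u v)

/-- `H` is a minor of `G`. -/
def IsMinorOf (H : SimpleGraph W) (G : SimpleGraph V) : Prop :=
  ∃ μ : W → Set V, IsMinorModel H G μ

/-- The lexicographic product `T · K_k`. -/
def lexK {ι : Type} (T : SimpleGraph ι) (k : ℕ) : SimpleGraph (ι × Fin k) where
  Adj a b := T.Adj a.1 b.1 ∨ (a.1 = b.1 ∧ a.2 ≠ b.2)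
  symm := Std.Symm.mk <| by
    rintro a b (h | ⟨h1, h2⟩)
    · exact Or.inl h.symm
    · exact Or.inr ⟨h1.symm, h2.symm⟩
  loopless := Std.Irrefl.mk <| by
    rintro a (h | ⟨_, h2⟩)
    · exact T.loopless.irrefl _ h
    · exact h2 rfl

/-- The lexicographic tree product number. -/
noncomputable def ltp (G : SimpleGraph V) : ℕ :=
  sInf {m | ∃ (ι : Type) (T : SimpleGraph ι), T.IsTree ∧ IsMinorOf G (lexK T m)}

/-- The `(T,χ)`-completion of `G`: make each union of two close bags a clique. -/
def LenientTD.completion {G : SimpleGraph V} (D : LenientTD G) : SimpleGraph V where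
  Adj u v := u ≠ v ∧ ∃ t t', (t = t' ∨ D.T.Adj t t') ∧
    u ∈ D.χ t ∪ D.χ t' ∧ v ∈ D.χ t ∪ D.χ t'
  symm := Std.Symm.mk <| by
    rintro u v ⟨hne, t, t', hc, hu, hv⟩
    exact ⟨hne.symm, t, t', hc, hv, hu⟩
  loopless := Std.Irrefl.mk fun u h => h.1 rfl

/-- `G` is chordal: every cycle of length at least four has a chord. -/
def IsChordal (G : SimpleGraph V) : Prop :=
  ∀ (v : V) (w : G.Walk v v), w.IsCycle → 4 ≤ w.length →
    ∃ x ∈ w.support, ∃ y ∈ w.support, G.Adj x y ∧ s(x, y) ∉ w.edges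

end Defs
lemma reach_induce_mono {ι : Type} (T : SimpleGraph ι) {A B : Set ι} (hAB : A ⊆ B)
    {x y : ι} (hx : x ∈ A) (hy : y ∈ A)
    (h : (T.induce A).Reachable ⟨x, hx⟩ ⟨y, hy⟩) :
    (T.induce B).Reachable ⟨x, hAB hx⟩ ⟨y, hAB hy⟩ := by
  exact h.map (⟨fun z => ⟨z.1, hAB z.2⟩, fun h => h⟩ : T.induce A →g T.induce B)

lemma walk_cross {α : Type} {H : SimpleGraph α} (Q : α → Prop) :
    ∀ {u v : α} (_ : H.Walk u v), Q u → ¬ Q v →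
    ∃ a b, H.Adj a b ∧ Q a ∧ ¬ Q b := by
  intro u v w
  induction w with
  | nil => intro h h'; exact absurd h h'
  | @cons u x v hadj w ih =>
    intro hu hv
    by_cases hq : Q x
    · exact ih hq hv
    · exact ⟨u, x, hadj, hu, hq⟩

/-- a connected set meeting the bags of the endpoints of a path in
`T` also meets the bag of every internal node of that path. -/
theorem connected_set_meets_internal_bag {V : Type} [Fintype V]
    (G : SimpleGraph V) (D : LenientTD G) (hT : 3 ≤ Nat.card D.ι)
    (S : Set V) (hS : (G.induce S).Connected)
    (t t' t'' : D.ι) (p : D.T.Walk t t'') (hp : p.IsPath)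
    (ht' : t' ∈ p.support) (h1 : t' ≠ t) (h2 : t' ≠ t'')
    (hts : (D.χ t ∩ S).Nonempty) (ht''s : (D.χ t'' ∩ S).Nonempty) :
    (D.χ t' ∩ S).Nonempty := by
  by_contra hne
  rw [Set.not_nonempty_iff_eq_empty] at hne
  classical
  set C : Set D.ι := {s | s ≠ t'} with hCdef
  have hnotbag : ∀ x ∈ S, ∀ s, x ∈ D.χ s → s ∈ C := by
    intro x hx s hxs heq
    have hmem : x ∈ D.χ t' ∩ S := ⟨heq ▸ hxs, hx⟩
    rw [hne] at hmem
    exact hmem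
  have htC : t ∈ C := fun h => h1 h.symm
  have ht''C : t'' ∈ C := fun h => h2 h.symm
  set Tc := D.T.induce C with hTcdef
  set P : V → Prop :=
    fun x => ∃ s, ∃ hs : s ∈ C, x ∈ D.χ s ∧ Tc.Reachable ⟨s, hs⟩ ⟨t, htC⟩ with hPdef
  have hP_all : ∀ x, x ∈ S → P x → ∀ r, x ∈ D.χ r → ∀ hrC : r ∈ C,
      Tc.Reachable ⟨r, hrC⟩ ⟨t, htC⟩ := by
    rintro x hx ⟨s, hs, hxs, hreach⟩ r hr hrC
    have hsub : {u | x ∈ D.χ u} ⊆ C := fun u hu => hnotbag x hx u hu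
    have h0 : (D.T.induce {u | x ∈ D.χ u}).Reachable ⟨r, hr⟩ ⟨s, hxs⟩ :=
      (D.trace_conn x).preconnected _ _
    exact (reach_induce_mono D.T hsub hr hxs h0).trans hreach
  have hkey : ¬ Tc.Reachable ⟨t'', ht''C⟩ ⟨t, htC⟩ := by
    rintro ⟨w⟩
    set w' := w.map (SimpleGraph.Embedding.induce C).toHom with hw'
    have hq : w'.reverse.bypass.IsPath := SimpleGraph.Walk.bypass_isPath _
    obtain ⟨q0, hq0, huniq⟩ := D.tree.existsUnique_path t t''
    have e1 : p = w'.reverse.bypass := (huniq p hp).trans (huniq _ hq).symm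
    have hmem : t' ∈ w'.reverse.bypass.support := e1 ▸ ht'
    have h3 : t' ∈ w'.support := by
      have := SimpleGraph.Walk.support_bypass_subset _ hmem
      rw [SimpleGraph.Walk.support_reverse] at this
      exact List.mem_reverse.mp this
    rw [hw', SimpleGraph.Walk.support_map] at h3
    obtain ⟨z, hz, hzz⟩ := List.mem_map.mp h3
    exact z.2 hzz
  obtain ⟨u₀, hu₀χ, hu₀S⟩ := hts
  obtain ⟨v₀, hv₀χ, hv₀S⟩ := ht''s
  have hPu : P u₀ := ⟨t, htC, hu₀χ, SimpleGraph.Reachable.refl _⟩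
  have hPv : ¬ P v₀ := fun h => hkey (hP_all v₀ hv₀S h t'' hv₀χ ht''C)
  obtain ⟨wr⟩ := hS.preconnected ⟨u₀, hu₀S⟩ ⟨v₀, hv₀S⟩
  obtain ⟨a, b, hab, hPa, hPb⟩ :=
    walk_cross (fun z : {x // x ∈ S} => P z.1) wr hPu hPv
  have hab' : G.Adj ↑a ↑b := hab
  obtain ⟨s, s', hclose, hu, hv⟩ := D.edge_mem ↑a ↑b hab'
  apply hPb
  have haS : (a : V) ∈ S := a.2
  have hbS : (b : V) ∈ S := b.2
  have step : ∀ r r', (r = r' ∨ D.T.Adj r r') → (a : V) ∈ D.χ r → (b : V) ∈ D.χ r' →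
      P ↑b := by
    intro r r' hc hr hr'
    have hrC := hnotbag _ haS r hr
    have hr'C := hnotbag _ hbS r' hr'
    have hreach_r : Tc.Reachable ⟨r, hrC⟩ ⟨t, htC⟩ := hP_all ↑a haS hPa r hr hrC
    rcases hc with heq | hadj
    · subst heq
      exact ⟨r, hrC, hr', hreach_r⟩
    · have hadj' : Tc.Adj ⟨r', hr'C⟩ ⟨r, hrC⟩ := hadj.symm
      exact ⟨r', hr'C, hr', hadj'.reachable.trans hreach_r⟩
  rcases hu with hu | hu <;> rcases hv with hv | hv
  · exact step s s (Or.inl rfl) hu hv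
  · exact step s s' hclose hu hv
  · refine step s' s ?_ hu hv
    rcases hclose with heq | hadj
    · exact Or.inl heq.symm
    · exact Or.inr hadj.symm
  · exact step s' s' (Or.inl rfl) hu hv
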